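/- Let A be a Noetherian integral domain and P a nonzero prime ideal of A which is not principal. If a ∈ A satisfies P ⊆ (a), then a is a unit of A. -/

import Mathlib

theorem stmt_1 {A : Type*} [CommRing A] [IsDomain A] [IsNoetherianRing A]
    (P : Ideal A) (hprime : P.IsPrime) (hne : P ≠ ⊥)
    (hnotprin : ¬ P.IsPrincipal)
    (a : A) (h : P ≤ Ideal.span {a}) :
    IsUnit a := by
  have haP : a ∉ P := by
    intro haP
    exact hnotprin ⟨⟨a, le_antisymm h (Ideal.span_le.mpr (by simpa using haP))⟩⟩
  have hle : P ≤ Ideal.span {a} • P := by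
    intro p hp
    obtain ⟨x, hx⟩ := Ideal.mem_span_singleton'.mp (h hp)
    have hxP : x ∈ P := by
      have hax : a * x ∈ P := by rw [mul_comm]; exact hx ▸ hp
      exact (hprime.mem_or_mem hax).resolve_left haP
    have : a * x ∈ Ideal.span {a} • P :=
      Submodule.smul_mem_smul (Ideal.mem_span_singleton_self a) hxP
    rwa [mul_comm, hx] at this
  obtain ⟨r, hr1, hr0⟩ :=
    Submodule.exists_sub_one_mem_and_smul_eq_zero_of_fg_of_le_smul (Ideal.span {a}) P
      (IsNoetherian.noetherian P) hle
  obtain ⟨n, hnP, hn0⟩ := Submodule.exists_mem_ne_zero_of_ne_bot hne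
  have hr : r = 0 := by
    have := hr0 n hnP
    simp only [smul_eq_mul, mul_eq_zero] at this
    exact this.resolve_right hn0
  rw [hr, zero_sub] at hr1
  obtain ⟨x, hx⟩ := Ideal.mem_span_singleton'.mp hr1
  exact IsUnit.of_mul_eq_one (a := a) (-x) (by linear_combination -hx)
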